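/- Let 0 < q < 1/3, λ > 1, and Θ = q^{−1/λ}. Let (Q_m)_{m≥1} be a sequence of positive integers such that Q_m ∈ 10ℕ⁺ and Q_{m+1}/Q_m ∈ 10ℕ⁺ for all m, and such that ℓ₁·exp(Θ^m) ≤ Q_m ≤ ℓ₂·exp(Θ^m) for some constants 0 < ℓ₁ ≤ ℓ₂ and all m ≥ 1. Define 𝒫(x) = Σ_{m=1}^∞ q^m sin(π Q_m x) for x ∈ ℝ. Then 𝒫 is nowhere Hölder continuous: for every x ∈ ℝ, every α ∈ (0,1], every M > 0, and every δ > 0, there exists h with 0 < |h| ≤ δ such that |𝒫(x+h) − 𝒫(x)| ≥ M·|h|^α. -/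

import Mathlib

open Real Filter Finset

lemma sinLip (A B : ℝ) : |Real.sin A - Real.sin B| ≤ |A - B| := by
  rw [Real.sin_sub_sin]
  have h1 : |Real.sin ((A-B)/2)| ≤ |(A-B)/2| := Real.abs_sin_le_abs
  have h2 : |Real.cos ((A+B)/2)| ≤ 1 := Real.abs_cos_le_one _
  calc |2 * Real.sin ((A-B)/2) * Real.cos ((A+B)/2)|
      = 2 * |Real.sin ((A-B)/2)| * |Real.cos ((A+B)/2)| := by
        rw [abs_mul, abs_mul]; norm_num
    _ ≤ 2 * |(A-B)/2| * 1 := by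
        apply mul_le_mul (by gcongr) h2 (abs_nonneg _) (by positivity)
    _ = |A - B| := by rw [abs_div, abs_two]; ring

lemma sq_div_four_le_exp {t : ℝ} (ht : 0 ≤ t) : t^2/4 ≤ Real.exp t := by
  have h1 : t/2 + 1 ≤ Real.exp (t/2) := Real.add_one_le_exp _
  have h2 : (t/2)^2 ≤ (t/2+1)^2 := by nlinarith
  have h3 : (t/2+1)^2 ≤ Real.exp (t/2) ^ 2 := by
    apply pow_le_pow_left₀ (by positivity) h1
  have h4 : Real.exp (t/2) ^ 2 = Real.exp t := by
    rw [← Real.exp_nat_mul]; congr 1; push_cast; ring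
  nlinarith

lemma eventually_linear_le_pow {θ : ℝ} (hθ : 1 < θ) (c A B : ℝ) (hc : 0 < c) :
    ∀ᶠ n : ℕ in atTop, A + B * n ≤ c * θ ^ n := by
  have hL : 0 < Real.log θ := Real.log_pos hθ
  set c' : ℝ := c * Real.log θ ^ 2 / 4 with hc'
  have hc'0 : 0 < c' := by positivity
  have key : ∀ n : ℕ, c' * n^2 ≤ c * θ ^ n := by
    intro n
    have ht : (0:ℝ) ≤ n * Real.log θ := by positivity
    have := sq_div_four_le_exp ht
    have hθn : θ ^ n = Real.exp (n * Real.log θ) := by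
      rw [Real.exp_nat_mul, Real.exp_log (by linarith)]
    rw [hθn]
    calc c' * n^2 = c * ((n * Real.log θ)^2/4) := by rw [hc']; ring
      _ ≤ c * Real.exp (n * Real.log θ) := by gcongr
  have htend : Tendsto (fun n : ℕ => (n:ℝ) * (c' * n - B) - A) atTop atTop := by
    apply tendsto_atTop_add_const_right
    apply Filter.Tendsto.atTop_mul_atTop₀ tendsto_natCast_atTop_atTop
    apply tendsto_atTop_add_const_right
    exact tendsto_natCast_atTop_atTop.const_mul_atTop hc'0
  filter_upwards [htend.eventually_ge_atTop 0] with n hn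
  have : A + B * n ≤ c' * n^2 := by nlinarith [sq_nonneg (n:ℝ)]
  linarith [key n]

/-- The lacunary trigonometric series `𝒫(x) = ∑_{m ≥ 1} q^m sin(π Q_m x)`. -/
noncomputable def lacP (q : ℝ) (Q : ℕ → ℕ) : ℝ → ℝ :=
  fun x => ∑' m : ℕ, q ^ (m + 1) * Real.sin (Real.pi * (Q (m + 1) : ℝ) * x)

set_option maxHeartbeats 2000000 in
/-- `𝒫` is nowhere Hölder continuous. -/
theorem statement11 (q lam : ℝ) (hq0 : 0 < q) (hq3 : q < 1 / 3) (hlam : 1 < lam)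
    (Q : ℕ → ℕ) (l₁ l₂ : ℝ) (hl₁ : 0 < l₁) (hl₁₂ : l₁ ≤ l₂)
    (hQ10 : ∀ m : ℕ, 1 ≤ m → ∃ a : ℕ, 0 < a ∧ Q m = 10 * a)
    (hQrat : ∀ m : ℕ, 1 ≤ m → ∃ a : ℕ, 0 < a ∧ Q (m + 1) = (10 * a) * Q m)
    (hQgrow : ∀ m : ℕ, 1 ≤ m →
      l₁ * Real.exp ((q ^ (-(1 / lam))) ^ m) ≤ (Q m : ℝ) ∧
      (Q m : ℝ) ≤ l₂ * Real.exp ((q ^ (-(1 / lam))) ^ m)) :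
    ∀ x a M δ : ℝ, 0 < a → a ≤ 1 → 0 < M → 0 < δ →
      ∃ h : ℝ, 0 < |h| ∧ |h| ≤ δ ∧
        M * |h| ^ a ≤ |lacP q Q (x + h) - lacP q Q x| := by
  intro x a M δ ha0 ha1 hM hδ
  have hq1 : q < 1 := by linarith
  have hl₂ : 0 < l₂ := lt_of_lt_of_le hl₁ hl₁₂
  have hπ : (0:ℝ) < Real.pi := Real.pi_pos
  set θ : ℝ := q ^ (-(1/lam)) with hθdef
  have hθ1 : 1 < θ := by
    rw [hθdef]
    refine (Real.one_lt_rpow_iff_of_pos hq0).mpr (Or.inr ⟨hq1, ?_⟩)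
    have : 0 < 1/lam := by positivity
    linarith
  have hθ0 : 0 < θ := by linarith
  -- basic facts about Q
  have hQpos : ∀ j, 1 ≤ j → 0 < Q j := by
    intro j hj; obtain ⟨b, hb, he⟩ := hQ10 j hj; omega
  have hQstep : ∀ d j, 1 ≤ j → Q j ≤ Q (j + d) := by
    intro d
    induction d with
    | zero => intro j hj; simp
    | succ e ih =>
      intro j hj
      obtain ⟨b, hb, he⟩ := hQrat (j+e) (by omega)
      have h1 := ih j hj
      have h2 : Q (j+e) ≤ Q (j+e+1) := by rw [he]; nlinarith [hQpos (j+e) (by omega)]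
      calc Q j ≤ Q (j+e) := h1
        _ ≤ Q (j + (e+1)) := by rw [show j + (e+1) = j+e+1 from rfl]; exact h2
  have hQmono : ∀ j j', 1 ≤ j → j ≤ j' → Q j ≤ Q j' := by
    intro j j' hj hjj
    have := hQstep (j' - j) j hj
    rwa [show j + (j'-j) = j' by omega] at this
  have hQmul : ∀ j, 1 ≤ j → ∀ d, 1 ≤ d → ∃ b, 0 < b ∧ Q (j + d) = 10 * b * Q j := by
    intro j hj d hd
    induction d with
    | zero => omega
    | succ e ih =>
      rcases Nat.lt_or_ge 1 (e+1) with h2 | h1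
      · have he1 : 1 ≤ e := by omega
        obtain ⟨b, hb, hbe⟩ := ih he1
        obtain ⟨c, hc, hce⟩ := hQrat (j+e) (by omega)
        refine ⟨10*c*b, by positivity, ?_⟩
        rw [show j + (e+1) = (j+e)+1 from rfl, hce, hbe]; ring
      · have he0 : e = 0 := by omega
        subst he0
        obtain ⟨b, hb, he⟩ := hQrat j hj
        exact ⟨b, hb, he⟩
  -- summability
  have hgeo : Summable (fun i : ℕ => q ^ (i+1)) := by
    simpa [pow_succ, mul_comm] using (summable_geometric_of_lt_one hq0.le hq1).mul_left q
  have hsum : ∀ y : ℝ, Summable (fun i : ℕ => q ^ (i+1) * Real.sin (Real.pi * (Q (i+1):ℝ) * y)) := by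
    intro y
    apply Summable.of_norm_bounded hgeo
    intro i
    rw [Real.norm_eq_abs, abs_mul, abs_of_pos (pow_pos hq0 (i+1))]
    calc q^(i+1) * |Real.sin (Real.pi * (Q (i+1):ℝ) * y)| ≤ q^(i+1) * 1 := by
          gcongr; exact Real.abs_sin_le_one _
      _ = q^(i+1) := mul_one _
  set c₁ : ℝ := min l₁ 1 with hc₁def
  have hc₁0 : 0 < c₁ := lt_min hl₁ one_pos
  have hlogq : Real.log q < 0 := Real.log_neg hq0 hq1
  have hqexp : ∀ k : ℕ, q ^ k = Real.exp (k * Real.log q) := by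
    intro k; rw [Real.exp_nat_mul, Real.exp_log hq0]
  -- eventual conditions
  have evA : ∀ᶠ n : ℕ in atTop, 1/δ ≤ l₁ * Real.exp (θ ^ (n+2)) := by
    filter_upwards [eventually_linear_le_pow hθ1 (θ^2) (Real.log (1/(δ*l₁))) 0 (by positivity)]
      with n hn
    have h1 : Real.log (1/(δ*l₁)) ≤ θ^(n+2) := by
      rw [show θ^(n+2) = θ^2*θ^n by ring]; linarith [hn]
    have h3 : 1/(δ*l₁) ≤ Real.exp (θ^(n+2)) := by
      rw [← Real.exp_log (show (0:ℝ) < 1/(δ*l₁) by positivity)]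
      exact Real.exp_le_exp.mpr h1
    calc 1/δ = l₁ * (1/(δ*l₁)) := by field_simp
      _ ≤ l₁ * Real.exp (θ^(n+2)) := by gcongr
  have evB : ∀ᶠ n : ℕ in atTop,
      Real.pi * (n+2) * l₂ * Real.exp (θ^(n+1)) ≤ q^(n+2)/40 * (l₁ * Real.exp (θ^(n+2))) := by
    filter_upwards [eventually_linear_le_pow hθ1 (θ^2 - θ)
      (Real.log (40*Real.pi*l₂/l₁) + 2 - 2*Real.log q) (1 - Real.log q)
      (by nlinarith)] with n hn
    have hG : Real.log (40*Real.pi*l₂*(n+2)/l₁) ≤ (θ^2-θ)*θ^n + (n+2)*Real.log q := by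
      have hlogsplit : Real.log (40*Real.pi*l₂*(n+2)/l₁)
          = Real.log (40*Real.pi*l₂/l₁) + Real.log ((n:ℝ)+2) := by
        rw [← Real.log_mul (by positivity) (by positivity)]
        congr 1
        field_simp
      have hlogn : Real.log ((n:ℝ)+2) ≤ (n:ℝ)+2 := by
        linarith [Real.log_le_sub_one_of_pos (show (0:ℝ) < (n:ℝ)+2 by positivity)]
      rw [hlogsplit]
      nlinarith [hn]
    have h2 : 40*Real.pi*l₂*(n+2)/l₁ ≤ Real.exp ((θ^2-θ)*θ^n + (n+2)*Real.log q) := by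
      rw [← Real.exp_log (show (0:ℝ) < 40*Real.pi*l₂*(n+2)/l₁ by positivity)]
      exact Real.exp_le_exp.mpr hG
    have h3 : 40*Real.pi*l₂*(n+2) ≤ l₁ * Real.exp ((θ^2-θ)*θ^n + (n+2)*Real.log q) := by
      calc 40*Real.pi*l₂*(n+2) = l₁ * (40*Real.pi*l₂*(n+2)/l₁) := by field_simp
        _ ≤ l₁ * Real.exp ((θ^2-θ)*θ^n + (n+2)*Real.log q) := by gcongr
    have h4 : Real.exp (θ^(n+1)) * Real.exp ((θ^2-θ)*θ^n + (n+2)*Real.log q)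
        = Real.exp (θ^(n+2)) * q^(n+2) := by
      rw [← Real.exp_add, hqexp (n+2), ← Real.exp_add]
      congr 1; push_cast; ring
    have h5 : Real.pi * (n+2) * l₂ * Real.exp (θ^(n+1)) * 40
        ≤ l₁ * (Real.exp (θ^(n+1)) * Real.exp ((θ^2-θ)*θ^n + (n+2)*Real.log q)) := by
      have he1 : 0 < Real.exp (θ^(n+1)) := Real.exp_pos _
      nlinarith [h3, he1]
    rw [h4] at h5
    have hq2 : 0 < q^(n+2) := pow_pos hq0 _
    nlinarith [h5]
  have evC : ∀ᶠ n : ℕ in atTop, 40*M ≤ c₁ * (q^(n+2) * Real.exp (a*θ^(n+2))) := by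
    filter_upwards [eventually_linear_le_pow hθ1 (a*θ^2)
      (Real.log (40*M/c₁) - 2*Real.log q) (-Real.log q)
      (mul_pos ha0 (pow_pos hθ0 2))] with n hn
    have hG : Real.log (40*M/c₁) ≤ a*θ^(n+2) + (n+2)*Real.log q := by
      rw [show a*θ^(n+2) = (a*θ^2)*θ^n by ring]; nlinarith [hn]
    have h2 : 40*M/c₁ ≤ Real.exp (a*θ^(n+2) + (n+2)*Real.log q) := by
      rw [← Real.exp_log (show (0:ℝ) < 40*M/c₁ by positivity)]
      exact Real.exp_le_exp.mpr hG
    have h4 : Real.exp (a*θ^(n+2) + (n+2)*Real.log q) = q^(n+2) * Real.exp (a*θ^(n+2)) := by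
      rw [Real.exp_add, hqexp (n+2)]; push_cast; ring
    rw [h4] at h2
    calc 40*M = c₁ * (40*M/c₁) := by field_simp
      _ ≤ c₁ * (q^(n+2) * Real.exp (a*θ^(n+2))) := by gcongr
  obtain ⟨n, hA, hB, hC⟩ := (evA.and (evB.and evC)).exists
  -- notation
  have hQm1 := (hQgrow (n+2) (by omega)).1
  have hQn1 := (hQgrow (n+1) (by omega)).2
  have hQmpos : (0:ℝ) < (Q (n+2) : ℝ) := by exact_mod_cast hQpos (n+2) (by omega)
  have hqm : (0:ℝ) < q^(n+2) := pow_pos hq0 _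
  set D : ℝ → ℕ → ℝ := fun r i =>
    q ^ (i+1) * Real.sin (Real.pi * (Q (i+1):ℝ) * (x+r))
      - q ^ (i+1) * Real.sin (Real.pi * (Q (i+1):ℝ) * x) with hDdef
  have shift : ∀ r : ℝ, ∀ j K N : ℕ, (Q j : ℝ) = K * (Q (n+2):ℝ) →
      (K:ℝ) * ((Q (n+2):ℝ) * r) = 2*N →
      Real.sin (Real.pi * (Q j:ℝ) * (x+r)) = Real.sin (Real.pi * (Q j:ℝ) * x) := by
    intro r j K N h1 h2
    have h3 : Real.pi * (Q j:ℝ) * (x+r) = Real.pi * (Q j:ℝ) * x + (N:ℤ) * (2*Real.pi) := by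
      push_cast
      linear_combination (Real.pi*(x+r) - Real.pi*x) * h1 + Real.pi * h2
    rw [h3, Real.sin_add_int_mul_two_pi]
  obtain ⟨c, hc, hce⟩ := hQrat (n+2) (by omega)
  have hcast1 : (Q (n+3) : ℝ) = (10*c : ℕ) * (Q (n+2):ℝ) := by
    rw [show n+3 = (n+2)+1 from rfl, hce]; push_cast; ring
  have key : ∃ r : ℝ, 0 < r ∧ (Q (n+2):ℝ) * r ≤ 1 ∧
      (∀ j, n+4 ≤ j → Real.sin (Real.pi * (Q j:ℝ) * (x+r)) = Real.sin (Real.pi * (Q j:ℝ) * x)) ∧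
      q^(n+2)/20 ≤ |D r (n+1) + D r (n+2)| := by
    have htail2 : ∀ (r : ℝ) (e : ℕ), (Q (n+2):ℝ) * r = 1/(e:ℝ) → (e = 1 ∨ e = 2) →
        ∀ j, n+4 ≤ j → Real.sin (Real.pi * (Q j:ℝ) * (x+r)) = Real.sin (Real.pi * (Q j:ℝ) * x) := by
      intro r e hre he j hj
      obtain ⟨b, hb, hbe⟩ := hQmul (n+3) (by omega) (j - (n+3)) (by omega)
      rw [show n+3 + (j - (n+3)) = j by omega] at hbe
      rcases he with he | he
      · apply shift r j (10*b*(10*c)) (50*b*c)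
        · rw [hbe]; push_cast [hcast1]; ring
        · rw [hre, he]; push_cast; ring
      · apply shift r j (10*b*(10*c)) (25*b*c)
        · rw [hbe]; push_cast [hcast1]; ring
        · rw [hre, he]; push_cast; ring
    rcases le_or_gt (1/4 : ℝ) |Real.sin (Real.pi * (Q (n+2):ℝ) * x)| with hbig | hsmall
    · -- case 1 : r = 1/Q (n+2)
      set r : ℝ := 1/(Q (n+2):ℝ) with hrdef
      have hre : (Q (n+2):ℝ) * r = 1/((1:ℕ):ℝ) := by
        rw [hrdef]; field_simp; norm_num
      refine ⟨r, by rw [hrdef]; positivity, by rw [hre]; norm_num, htail2 r 1 hre (Or.inl rfl), ?_⟩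
      have hang1 : Real.pi * (Q (n+2):ℝ) * (x + r) = Real.pi * (Q (n+2):ℝ) * x + Real.pi := by
        rw [hrdef]; field_simp
      have hD1 : D r (n+1) = -(2 * q^(n+2) * Real.sin (Real.pi * (Q (n+2):ℝ) * x)) := by
        simp only [hDdef]
        norm_num
        rw [hang1, Real.sin_add_pi]
        ring
      have hD2 : D r (n+2) = 0 := by
        simp only [hDdef]
        norm_num
        rw [shift r (n+3) (10*c) (5*c) hcast1 (by rw [hre]; push_cast; ring)]
        ring
      rw [hD1, hD2, add_zero, abs_neg, abs_mul, abs_of_pos (by positivity : (0:ℝ) < 2*q^(n+2))]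
      nlinarith [hqm]
    · -- case 2 : r = 1/(2 Q (n+2))
      set r : ℝ := 1/(2*(Q (n+2):ℝ)) with hrdef
      have hre : (Q (n+2):ℝ) * r = 1/((2:ℕ):ℝ) := by
        rw [hrdef]; field_simp; ring
      refine ⟨r, by rw [hrdef]; positivity, ?_, htail2 r 2 hre (Or.inr rfl), ?_⟩
      · rw [hre]; norm_num
      have hang1 : Real.pi * (Q (n+2):ℝ) * (x + r) = Real.pi * (Q (n+2):ℝ) * x + Real.pi/2 := by
        rw [hrdef]; field_simp
      have hD1 : D r (n+1) = q^(n+2) * (Real.cos (Real.pi * (Q (n+2):ℝ) * x)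
          - Real.sin (Real.pi * (Q (n+2):ℝ) * x)) := by
        simp only [hDdef]
        norm_num
        rw [hang1, Real.sin_add_pi_div_two]
        ring
      have hD2 : |D r (n+2)| ≤ 2 * q^(n+3) := by
        simp only [hDdef]
        norm_num
        calc |q^(n+3) * Real.sin (Real.pi * (Q (n+3):ℝ) * (x+r))
              - q^(n+3) * Real.sin (Real.pi * (Q (n+3):ℝ) * x)|
            ≤ |q^(n+3) * Real.sin (Real.pi * (Q (n+3):ℝ) * (x+r))|
              + |q^(n+3) * Real.sin (Real.pi * (Q (n+3):ℝ) * x)| := abs_sub _ _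
          _ ≤ q^(n+3) * 1 + q^(n+3) * 1 := by
              rw [abs_mul, abs_mul, abs_of_pos (pow_pos hq0 (n+3))]
              gcongr <;> exact Real.abs_sin_le_one _
          _ = 2 * q^(n+3) := by ring
      set s := Real.sin (Real.pi * (Q (n+2):ℝ) * x) with hs
      set co := Real.cos (Real.pi * (Q (n+2):ℝ) * x) with hco
      have hpyth : s^2 + co^2 = 1 := Real.sin_sq_add_cos_sq _
      have hcobig : 29/30 ≤ |co| := by
        nlinarith [sq_abs co, sq_abs s, abs_nonneg co, abs_nonneg s, hsmall]
      have e1 : |D r (n+1)| - |D r (n+2)| ≤ |D r (n+1) + D r (n+2)| := by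
        have h := abs_add_le (D r (n+1) + D r (n+2)) (-(D r (n+2)))
        rw [add_neg_cancel_right, abs_neg] at h
        linarith
      have e2 : q^(n+2) * (|co| - |s|) ≤ |D r (n+1)| := by
        rw [hD1, abs_mul, abs_of_pos hqm]
        have := abs_sub_abs_le_abs_sub co s
        nlinarith [hqm]
      have hq3' : q^(n+3) = q * q^(n+2) := by ring
      nlinarith [e1, e2, hD2, hqm, hsmall, hcobig]
  obtain ⟨r, hr0, hrQ, htail, hmain⟩ := key
  refine ⟨r, abs_pos.mpr hr0.ne', ?_, ?_⟩
  · rw [abs_of_pos hr0]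
    have h1 : 1/δ ≤ (Q (n+2):ℝ) := le_trans hA hQm1
    have h2 : 1 ≤ (Q (n+2):ℝ) * δ := (div_le_iff₀ hδ).mp h1
    nlinarith [h2, hrQ, hQmpos]
  · -- main inequality
    have hdiff : lacP q Q (x+r) - lacP q Q x = ∑' i, D r i := by
      simp only [lacP]
      rw [← Summable.tsum_sub (hsum (x+r)) (hsum x)]
    have hzero : ∀ i ∉ Finset.range (n+3), D r i = 0 := by
      intro i hi
      rw [Finset.mem_range, not_lt] at hi
      have ht := htail (i+1) (by omega)
      simp only [hDdef]
      rw [ht, sub_self]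
    have hsplit : ∑' i, D r i = ∑ i ∈ Finset.range (n+3), D r i := tsum_eq_sum hzero
    rw [hdiff, hsplit, Finset.sum_range_succ, Finset.sum_range_succ]
    set S := ∑ i ∈ Finset.range (n+1), D r i with hSdef
    -- bound on S
    have hSb : |S| ≤ ((n:ℝ)+1) * (Real.pi * (Q (n+1):ℝ) * r) := by
      calc |S| ≤ ∑ i ∈ Finset.range (n+1), |D r i| := Finset.abs_sum_le_sum_abs _ _
        _ ≤ ∑ _i ∈ Finset.range (n+1), Real.pi * (Q (n+1):ℝ) * r := by
            apply Finset.sum_le_sum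
            intro i hi
            rw [Finset.mem_range] at hi
            have hq' : q^(i+1) ≤ 1 := pow_le_one₀ hq0.le hq1.le
            have hQc : (0:ℝ) ≤ (Q (i+1):ℝ) := Nat.cast_nonneg _
            have hlip : |Real.sin (Real.pi * (Q (i+1):ℝ) * (x+r))
                - Real.sin (Real.pi * (Q (i+1):ℝ) * x)| ≤ Real.pi * (Q (i+1):ℝ) * r := by
              have h0 := sinLip (Real.pi * (Q (i+1):ℝ) * (x+r)) (Real.pi * (Q (i+1):ℝ) * x)
              have harg : |Real.pi * (Q (i+1):ℝ) * (x+r) - Real.pi * (Q (i+1):ℝ) * x|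
                  = Real.pi * (Q (i+1):ℝ) * r := by
                rw [show Real.pi * (Q (i+1):ℝ) * (x+r) - Real.pi * (Q (i+1):ℝ) * x
                    = Real.pi * (Q (i+1):ℝ) * r by ring]
                exact abs_of_nonneg (by positivity)
              rw [harg] at h0
              exact h0
            have hDi : |D r i| ≤ Real.pi * (Q (i+1):ℝ) * r := by
              simp only [hDdef]
              rw [← mul_sub, abs_mul, abs_of_pos (pow_pos hq0 _)]
              calc q^(i+1) * |Real.sin (Real.pi * (Q (i+1):ℝ) * (x+r))
                    - Real.sin (Real.pi * (Q (i+1):ℝ) * x)|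
                  ≤ 1 * (Real.pi * (Q (i+1):ℝ) * r) :=
                    mul_le_mul hq' hlip (abs_nonneg _) zero_le_one
                _ = Real.pi * (Q (i+1):ℝ) * r := one_mul _
            refine le_trans hDi ?_
            have hmon : (Q (i+1):ℝ) ≤ (Q (n+1):ℝ) := by
              exact_mod_cast hQmono (i+1) (n+1) (by omega) (by omega)
            have := mul_le_mul_of_nonneg_left hmon hπ.le
            nlinarith [hr0]
        _ = ((n:ℝ)+1) * (Real.pi * (Q (n+1):ℝ) * r) := by
            rw [Finset.sum_const, Finset.card_range, nsmul_eq_mul]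
            push_cast
            ring
    have hS : |S| ≤ q^(n+2)/40 := by
      have t1 : ((n:ℝ)+1) * (Real.pi * (Q (n+1):ℝ) * r)
          ≤ (Real.pi * ((n:ℝ)+2) * l₂ * Real.exp (θ^(n+1))) * r := by
        have u1 : Real.pi * (Q (n+1):ℝ) * r ≤ Real.pi * (l₂ * Real.exp (θ^(n+1))) * r :=
          mul_le_mul_of_nonneg_right (mul_le_mul_of_nonneg_left hQn1 hπ.le) hr0.le
        have u2 : ((n:ℝ)+1) * (Real.pi * (Q (n+1):ℝ) * r)
            ≤ ((n:ℝ)+2) * (Real.pi * (l₂ * Real.exp (θ^(n+1))) * r) := by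
          apply mul_le_mul (by linarith) u1
            (mul_nonneg (mul_nonneg hπ.le (Nat.cast_nonneg _)) hr0.le) (by positivity)
        calc ((n:ℝ)+1) * (Real.pi * (Q (n+1):ℝ) * r)
            ≤ ((n:ℝ)+2) * (Real.pi * (l₂ * Real.exp (θ^(n+1))) * r) := u2
          _ = (Real.pi * ((n:ℝ)+2) * l₂ * Real.exp (θ^(n+1))) * r := by ring
      have t2 : (Real.pi * ((n:ℝ)+2) * l₂ * Real.exp (θ^(n+1))) * r
          ≤ (q^(n+2)/40 * (l₁ * Real.exp (θ^(n+2)))) * r :=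
        mul_le_mul_of_nonneg_right hB hr0.le
      have t3 : (q^(n+2)/40 * (l₁ * Real.exp (θ^(n+2)))) * r ≤ q^(n+2)/40 := by
        have h4 : l₁ * Real.exp (θ^(n+2)) * r ≤ 1 := by
          calc l₁ * Real.exp (θ^(n+2)) * r ≤ (Q (n+2):ℝ) * r :=
                mul_le_mul_of_nonneg_right hQm1 hr0.le
            _ ≤ 1 := hrQ
        calc (q^(n+2)/40 * (l₁ * Real.exp (θ^(n+2)))) * r
            = q^(n+2)/40 * (l₁ * Real.exp (θ^(n+2)) * r) := by ring
          _ ≤ q^(n+2)/40 * 1 := by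
              apply mul_le_mul_of_nonneg_left h4 (by positivity)
          _ = q^(n+2)/40 := mul_one _
      linarith [hSb, t1, t2, t3]
    -- bound M * |r|^a
    have hMr : M * |r| ^ a ≤ q^(n+2)/40 := by
      rw [abs_of_pos hr0]
      have hr1 : r ≤ 1/(Q (n+2):ℝ) := by
        rw [le_div_iff₀ hQmpos]
        linarith [hrQ]
      have h1 : r ^ a ≤ (1/(Q (n+2):ℝ)) ^ a := Real.rpow_le_rpow hr0.le hr1 ha0.le
      have h2 : (1/(Q (n+2):ℝ)) ^ a = 1 / ((Q (n+2):ℝ)) ^ a := by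
        rw [Real.div_rpow zero_le_one hQmpos.le, Real.one_rpow]
      have hb4 : c₁ ≤ l₁ ^ a := by
        rcases le_total l₁ 1 with hl | hl
        · have h5 := Real.rpow_le_rpow_of_exponent_ge hl₁ hl ha1
          rw [Real.rpow_one] at h5
          exact le_trans (min_le_left _ _) h5
        · have h5 := Real.rpow_le_rpow_of_exponent_le hl ha0.le
          rw [Real.rpow_zero] at h5
          exact le_trans (min_le_right _ _) h5
      have hb3 : Real.exp (θ^(n+2)) ^ a = Real.exp (a * θ^(n+2)) := by
        rw [← Real.exp_mul, mul_comm]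
      have h3 : c₁ * Real.exp (a*θ^(n+2)) ≤ ((Q (n+2):ℝ)) ^ a := by
        have hb1 : (l₁ * Real.exp (θ^(n+2))) ^ a ≤ (Q (n+2):ℝ) ^ a :=
          Real.rpow_le_rpow (by positivity) hQm1 ha0.le
        have hb2 : (l₁ * Real.exp (θ^(n+2))) ^ a = l₁^a * Real.exp (θ^(n+2))^a :=
          Real.mul_rpow hl₁.le (Real.exp_pos _).le
        calc c₁ * Real.exp (a*θ^(n+2)) ≤ l₁^a * Real.exp (a*θ^(n+2)) :=
              mul_le_mul_of_nonneg_right hb4 (Real.exp_pos _).le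
          _ = (l₁ * Real.exp (θ^(n+2)))^a := by rw [hb2, hb3]
          _ ≤ (Q (n+2):ℝ)^a := hb1
      have hE : (0:ℝ) < Real.exp (a*θ^(n+2)) := Real.exp_pos _
      have hcE : (0:ℝ) < c₁ * Real.exp (a*θ^(n+2)) := by positivity
      have h6 : M * r ^ a ≤ M * (1 / (c₁ * Real.exp (a*θ^(n+2)))) := by
        have h7 : r ^ a ≤ 1 / (c₁ * Real.exp (a*θ^(n+2))) := by
          calc r ^ a ≤ (1/(Q (n+2):ℝ)) ^ a := h1
            _ = 1 / ((Q (n+2):ℝ)) ^ a := h2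
            _ ≤ 1 / (c₁ * Real.exp (a*θ^(n+2))) := by
                apply one_div_le_one_div_of_le hcE h3
        exact mul_le_mul_of_nonneg_left h7 hM.le
      have h8 : M * (1 / (c₁ * Real.exp (a*θ^(n+2)))) ≤ q^(n+2)/40 := by
        rw [mul_one_div, div_le_div_iff₀ hcE (by norm_num : (0:ℝ) < 40)]
        nlinarith [hC]
      linarith
    -- final assembly
    have eT : |D r (n+1) + D r (n+2)| - |S| ≤ |S + D r (n+1) + D r (n+2)| := by
      have h := abs_add_le (S + D r (n+1) + D r (n+2)) (-S)
      have h9 : S + D r (n+1) + D r (n+2) + (-S) = D r (n+1) + D r (n+2) := by ring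
      rw [h9, abs_neg] at h
      linarith
    have : q^(n+2)/40 ≤ |S + D r (n+1) + D r (n+2)| := by
      linarith [hmain, hS, eT]
    linarith [hMr, this]
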